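/- Let q be a prime power and b, k, n positive integers with k dividing b and k ≤ n. Suppose U_1, …, U_n are F_q-subspaces of F_q^b, each of dimension b/k, forming an every-k independent set: for every subset T ⊆ {1,…,n} with |T| = k, dim(Σ_{t∈T} U_t) = b. Then there exists an injective F_q-linear map f : F_q^b → (F_q^{b/k})^n such that for every subset J ⊆ {1,…,n} with |J| = k, the F_q-linear map x ↦ (f(x)_j)_{j∈J} from F_q^b to (F_q^{b/k})^k is injective (equivalently bijective); that is, the image of f is an F_q-linear code of length n over the alphabet F_q^{b/k} with q^b codewords in which any k coordinates determine the codeword, i.e., an [n,k] MDS code over F_{q^{b/k}} linear over F_q. -/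

import Mathlib

theorem stmt14 (q b k n : ℕ) (hq : IsPrimePow q) (hb : 0 < b) (hk : 0 < k)
    (hn : 0 < n) (hkb : k ∣ b) (hkn : k ≤ n)
    (Fq : Type*) [Field Fq] [Fintype Fq] (hF : Fintype.card Fq = q)
    (U : Fin n → Submodule Fq (Fin b → Fq))
    (hdim : ∀ i, Module.finrank Fq (U i) = b / k)
    (hind : ∀ T : Finset (Fin n), T.card = k →
      Module.finrank Fq ↥(T.sup U) = b) :
    ∃ f : (Fin b → Fq) →ₗ[Fq] (Fin n → (Fin (b / k) → Fq)),
      Function.Injective f ∧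
      ∀ J : Finset (Fin n), J.card = k →
        Function.Injective
          (fun x : Fin b → Fq => fun j : {j : Fin n // j ∈ J} => f x j.1) := by
  classical
  -- a basis of each U i
  let u : ∀ i, Module.Basis (Fin (b / k)) Fq (U i) := fun i =>
    Module.finBasisOfFinrankEq Fq (U i) (hdim i)
  -- the coordinate maps
  let π : Fin n → (Fin b → Fq) →ₗ[Fq] (Fin (b / k) → Fq) := fun i =>
    LinearMap.pi (fun m =>
      { toFun := fun x => dotProduct x ((u i m : Fin b → Fq))
        map_add' := fun a c => add_dotProduct a c _
        map_smul' := fun c a => smul_dotProduct c a _ })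
  have key : ∀ (J : Finset (Fin n)), J.card = k → ∀ x : Fin b → Fq,
      (∀ j ∈ J, π j x = 0) → x = 0 := by
    intro J hJ x hx
    set g : (Fin b → Fq) →ₗ[Fq] Fq :=
      { toFun := fun v => dotProduct x v
        map_add' := fun a c => dotProduct_add x a c
        map_smul' := fun c a => by simp [dotProduct_smul] } with hg
    have hsup : J.sup U ≤ LinearMap.ker g := by
      refine Finset.sup_le ?_
      intro j hj
      have hspan : U j =
          Submodule.span Fq (Set.range (fun m => ((u j m : Fin b → Fq)))) := by
        conv_lhs => rw [← Submodule.map_subtype_top (U j), ← (u j).span_eq,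
          Submodule.map_span]
        congr 1
        ext v
        simp [Set.range_comp]
      rw [hspan, Submodule.span_le]
      rintro v ⟨m, rfl⟩
      have h0 := congrFun (hx j hj) m
      simpa [g, π] using h0
    have htop : J.sup U = ⊤ := by
      apply Submodule.eq_top_of_finrank_eq
      rw [hind J hJ]
      simp [Module.finrank_pi]
    have hall : ∀ v : Fin b → Fq, g v = 0 := by
      intro v
      have : v ∈ LinearMap.ker g := hsup (htop ▸ Submodule.mem_top)
      exact this
    funext t
    have := hall (Pi.single t 1)
    simpa [g, dotProduct_single] using this
  -- a set of size k exists
  obtain ⟨J0, hJ0sub, hJ0⟩ := Finset.exists_subset_card_eq (s := (Finset.univ : Finset (Fin n))) (n := k)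
    (by simpa using hkn)
  refine ⟨LinearMap.pi π, ?_, ?_⟩
  · intro x y hxy
    have hx : ∀ j ∈ J0, π j (x - y) = 0 := by
      intro j hj
      have : π j x = π j y := congrFun hxy j
      simp [map_sub, this]
    have := key J0 hJ0 (x - y) hx
    exact sub_eq_zero.mp this
  · intro J hJ x y hxy
    have hx : ∀ j ∈ J, π j (x - y) = 0 := by
      intro j hj
      have : π j x = π j y := congrFun hxy ⟨j, hj⟩
      simp [map_sub, this]
    have := key J hJ (x - y) hx
    exact sub_eq_zero.mp this
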